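/- arXiv:2411.12208 — 2 statements merged into one kernel-verified Lean document; each statement's English description precedes it below -/
import Mathlib

section
/- Let n = 4m with m ≥ 2, and let |ψ⟩ be an n-qubit pure state. For every subset A of the parties with |A| = 2m+1, there exists a (2m)-subset B ⊆ A such that the reduction of |ψ⟩⟨ψ| to B is not maximally mixed. -/
/-- Combine an assignment on `S` and on its complement into a full assignment. -/
def glue {n : ℕ} (S : Finset (Fin n)) (a : {x // x ∈ S} → Fin 2)
    (b : {x // x ∈ Sᶜ} → Fin 2) : Fin n → Fin 2 :=
  fun i => if h : i ∈ S then a ⟨i, h⟩ else b ⟨i, Finset.mem_compl.mpr h⟩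

/-- The reduced density matrix of the pure state `ψ` on the set of qubits `S`
(partial trace of `|ψ⟩⟨ψ|` over the qubits outside `S`). -/
noncomputable def reduced {n : ℕ} (ψ : (Fin n → Fin 2) → ℂ) (S : Finset (Fin n)) :
    Matrix ({x // x ∈ S} → Fin 2) ({x // x ∈ S} → Fin 2) ℂ :=
  Matrix.of fun a b => ∑ c : {x // x ∈ Sᶜ} → Fin 2,
    ψ (glue S a c) * star (ψ (glue S b c))

/-- The reduction of `ψ` to `S` is maximally mixed, i.e. `ρ_S = I / 2^|S|`. -/
def IsMaxMixed {n : ℕ} (ψ : (Fin n → Fin 2) → ℂ) (S : Finset (Fin n)) : Prop :=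
  reduced ψ S = ((2 : ℂ) ^ S.card)⁻¹ • 1

-- (will be concatenated after p1 content; for testing, include p1 by copy)

open Finset

/-- single-qubit Pauli matrices as entry functions -/
def pauli (s : Fin 4) (a b : Fin 2) : ℂ :=
  if s = 0 then (if a = b then 1 else 0)
  else if s = 1 then (if a = b then 0 else 1)
  else if s = 2 then (if a = b then 0 else if a = 0 then -Complex.I else Complex.I)
  else (if a = b then (if a = 0 then 1 else -1) else 0)

lemma pauli_zero (a b : Fin 2) : pauli 0 a b = if a = b then 1 else 0 := by
  simp [pauli]

lemma pauli_tr {s : Fin 4} (hs : s ≠ 0) : ∑ a : Fin 2, pauli s a a = 0 := by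
  fin_cases s
  · exact absurd rfl hs
  all_goals simp [pauli, Fin.sum_univ_two]

lemma pauli_swap (a b c d : Fin 2) :
    ∑ s : Fin 4, pauli s a b * pauli s c d
      = if a = d ∧ b = c then 2 else 0 := by
  fin_cases a <;> fin_cases b <;> fin_cases c <;> fin_cases d <;>
    simp [pauli, Fin.sum_univ_four] <;> ring_nf <;>
    simp [Complex.I_sq] <;> ring

lemma pauli_orth (x z : Fin 4) :
    ∑ a : Fin 2, ∑ b : Fin 2, pauli x a b * pauli z b a = if x = z then 2 else 0 := by
  fin_cases x <;> fin_cases z <;>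
    simp [pauli, Fin.sum_univ_two] <;> ring_nf <;>
    simp [Complex.I_sq] <;> ring

noncomputable def tau (x y z : Fin 4) : ℂ :=
  ∑ a : Fin 2, ∑ b : Fin 2, ∑ c : Fin 2, pauli x a b * pauli y b c * pauli z c a

lemma tau_mid_zero (x z : Fin 4) : tau x 0 z = if x = z then 2 else 0 := by
  fin_cases x <;> fin_cases z <;>
    simp [tau, pauli, Fin.sum_univ_two] <;> ring_nf <;>
    simp [Complex.I_sq] <;> ring

lemma tau_right_zero (x y : Fin 4) : tau x y 0 = if x = y then 2 else 0 := by
  fin_cases x <;> fin_cases y <;>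
    simp [tau, pauli, Fin.sum_univ_two] <;> ring_nf <;>
    simp [Complex.I_sq] <;> ring

lemma tau_zeros {x : Fin 4} (hx : x ≠ 0) : tau x 0 0 = 0 := by
  fin_cases x
  · exact absurd rfl hx
  all_goals simp [tau, pauli, Fin.sum_univ_two]

lemma tau_anti {x y z : Fin 4} (hx : x ≠ 0) (hy : y ≠ 0) (hz : z ≠ 0) :
    tau x y z = - tau x z y := by
  fin_cases x <;> simp_all <;> fin_cases y <;> simp_all <;> fin_cases z <;> simp_all <;>
    simp [tau, pauli, Fin.sum_univ_two] <;> ring_nf <;>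
    simp [Complex.I_sq] <;> ring

section Multi
variable {ι : Type} [Fintype ι] [DecidableEq ι]

noncomputable def Pm (s : ι → Fin 4) (a b : ι → Fin 2) : ℂ :=
  ∏ i, pauli (s i) (a i) (b i)

noncomputable def trP (s : ι → Fin 4) (ρ : Matrix (ι → Fin 2) (ι → Fin 2) ℂ) : ℂ :=
  ∑ a, ∑ b, Pm s a b * ρ b a

lemma prod_ite_eq_pow (p : ι → Prop) [DecidablePred p] (x : ℂ) :
    (∏ i, if p i then x else 0) = if ∀ i, p i then x ^ Fintype.card ι else 0 := by
  by_cases h : ∀ i, p i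
  · simp [h, Finset.prod_const]
  · push_neg at h
    obtain ⟨i, hi⟩ := h
    rw [Finset.prod_eq_zero (Finset.mem_univ i) (by simp [hi])]
    rw [if_neg (fun h' => hi (h' i))]

lemma Pm_zero (a b : ι → Fin 2) : Pm 0 a b = if a = b then 1 else 0 := by
  unfold Pm
  have : ∀ i : ι, pauli ((0 : ι → Fin 4) i) (a i) (b i) = if a i = b i then 1 else 0 :=
    fun i => pauli_zero (a i) (b i)
  rw [Finset.prod_congr rfl (fun i _ => this i), prod_ite_eq_pow (fun i => a i = b i)]
  simp [funext_iff]

lemma Pm_orth (s t : ι → Fin 4) :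
    ∑ b : ι → Fin 2, ∑ c : ι → Fin 2, Pm s b c * Pm t c b
      = if s = t then (2:ℂ) ^ Fintype.card ι else 0 := by
  have : ∀ b : ι → Fin 2, ∑ c : ι → Fin 2, Pm s b c * Pm t c b
      = ∏ i, ∑ y : Fin 2, pauli (s i) (b i) y * pauli (t i) y (b i) := by
    intro b
    rw [Fintype.prod_sum (fun i y => pauli (s i) (b i) y * pauli (t i) y (b i))]
    apply Finset.sum_congr rfl
    intro c _
    rw [Pm, Pm, ← Finset.prod_mul_distrib]
  rw [Finset.sum_congr rfl (fun b _ => this b)]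
  rw [← Fintype.prod_sum (fun (i : ι) (x : Fin 2) => ∑ y : Fin 2, pauli (s i) x y * pauli (t i) y x)]
  have : ∀ i, (∑ x : Fin 2, ∑ y : Fin 2, pauli (s i) x y * pauli (t i) y x)
      = if s i = t i then (2:ℂ) else 0 := fun i => pauli_orth (s i) (t i)
  rw [Finset.prod_congr rfl (fun i _ => this i), prod_ite_eq_pow (fun i => s i = t i)]
  simp [funext_iff]
noncomputable def Ttrip (r s t : ι → Fin 4) : ℂ :=
  ∑ a : ι → Fin 2, ∑ b : ι → Fin 2, ∑ c : ι → Fin 2, Pm r a b * Pm s b c * Pm t c a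

lemma Ttrip_eq_prod (r s t : ι → Fin 4) :
    Ttrip r s t = ∏ i, tau (r i) (s i) (t i) := by
  unfold Ttrip tau
  have h2 : ∀ (a b : ι → Fin 2), ∑ c : ι → Fin 2, Pm r a b * Pm s b c * Pm t c a
      = ∏ i, ∑ z : Fin 2, pauli (r i) (a i) (b i) * pauli (s i) (b i) z * pauli (t i) z (a i) := by
    intro a b
    rw [Fintype.prod_sum (fun (i : ι) (z : Fin 2) =>
      pauli (r i) (a i) (b i) * pauli (s i) (b i) z * pauli (t i) z (a i))]
    apply Finset.sum_congr rfl
    intro c _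
    rw [Pm, Pm, Pm, ← Finset.prod_mul_distrib, ← Finset.prod_mul_distrib]
  have h1 : ∀ (a : ι → Fin 2), ∑ b : ι → Fin 2, ∑ c : ι → Fin 2, Pm r a b * Pm s b c * Pm t c a
      = ∏ i, ∑ y : Fin 2, ∑ z : Fin 2,
          pauli (r i) (a i) y * pauli (s i) y z * pauli (t i) z (a i) := by
    intro a
    rw [Fintype.prod_sum (fun (i : ι) (y : Fin 2) => ∑ z : Fin 2,
      pauli (r i) (a i) y * pauli (s i) y z * pauli (t i) z (a i))]
    exact Finset.sum_congr rfl (fun b _ => h2 a b)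
  rw [Finset.sum_congr rfl (fun a _ => h1 a),
    Fintype.prod_sum (fun (i : ι) (x : Fin 2) => ∑ y : Fin 2, ∑ z : Fin 2,
      pauli (r i) x y * pauli (s i) y z * pauli (t i) z x)]

lemma Pm_complete (u v a b : ι → Fin 2) :
    ∑ s : ι → Fin 4, Pm s u v * Pm s a b
      = if u = b ∧ v = a then (2:ℂ) ^ Fintype.card ι else 0 := by
  have : ∑ s : ι → Fin 4, Pm s u v * Pm s a b
      = ∏ i, ∑ x : Fin 4, pauli x (u i) (v i) * pauli x (a i) (b i) := by
    rw [Fintype.prod_sum (fun (i : ι) (x : Fin 4) =>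
      pauli x (u i) (v i) * pauli x (a i) (b i))]
    apply Finset.sum_congr rfl
    intro s _
    rw [Pm, Pm, ← Finset.prod_mul_distrib]
  rw [this, Finset.prod_congr rfl (fun i _ => pauli_swap (u i) (v i) (a i) (b i)),
    prod_ite_eq_pow (fun i => u i = b i ∧ v i = a i)]
  congr 1
  simp only [eq_iff_iff, forall_and, funext_iff]

lemma Pm_expansion (ρ : Matrix (ι → Fin 2) (ι → Fin 2) ℂ) (a b : ι → Fin 2) :
    ∑ s : ι → Fin 4, trP s ρ * Pm s a b = (2:ℂ) ^ Fintype.card ι * ρ a b := by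
  unfold trP
  simp only [Finset.sum_mul]
  rw [Finset.sum_comm]
  have key : ∀ u v : ι → Fin 2, ∑ s : ι → Fin 4, Pm s u v * ρ v u * Pm s a b
      = ρ v u * (if u = b ∧ v = a then (2:ℂ) ^ Fintype.card ι else 0) := by
    intro u v
    rw [← Pm_complete u v a b, Finset.mul_sum]
    apply Finset.sum_congr rfl
    intro s _; ring
  have swap : ∀ u : ι → Fin 2, ∑ s : ι → Fin 4, ∑ v : ι → Fin 2,
      Pm s u v * ρ v u * Pm s a b = ∑ v : ι → Fin 2, ∑ s : ι → Fin 4,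
      Pm s u v * ρ v u * Pm s a b := fun u => Finset.sum_comm
  rw [Finset.sum_congr rfl (fun u _ => swap u)]
  rw [Finset.sum_congr rfl (fun u _ => Finset.sum_congr rfl (fun v _ => key u v))]
  rw [Finset.sum_eq_single b (fun u _ hu => Finset.sum_eq_zero (fun v _ => by simp [hu]))
    (by simp)]
  rw [Finset.sum_eq_single a (fun v _ hv => by simp [hv]) (by simp)]
  simp [mul_comm]

lemma sum_comm5 {α β : Type} [Fintype α] [Fintype β] (F : α → α → β → β → β → ℂ) :
    ∑ a : β, ∑ b : β, ∑ c : β, ∑ s : α, ∑ t : α, F s t a b c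
      = ∑ s : α, ∑ t : α, ∑ a : β, ∑ b : β, ∑ c : β, F s t a b c := by
  calc ∑ a : β, ∑ b : β, ∑ c : β, ∑ s : α, ∑ t : α, F s t a b c
      = ∑ a : β, ∑ b : β, ∑ s : α, ∑ c : β, ∑ t : α, F s t a b c :=
        Finset.sum_congr rfl fun a _ => Finset.sum_congr rfl fun b _ => Finset.sum_comm
    _ = ∑ a : β, ∑ s : α, ∑ b : β, ∑ c : β, ∑ t : α, F s t a b c :=
        Finset.sum_congr rfl fun a _ => Finset.sum_comm
    _ = ∑ s : α, ∑ a : β, ∑ b : β, ∑ c : β, ∑ t : α, F s t a b c := Finset.sum_comm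
    _ = ∑ s : α, ∑ a : β, ∑ b : β, ∑ t : α, ∑ c : β, F s t a b c :=
        Finset.sum_congr rfl fun s _ => Finset.sum_congr rfl fun a _ =>
          Finset.sum_congr rfl fun b _ => Finset.sum_comm
    _ = ∑ s : α, ∑ a : β, ∑ t : α, ∑ b : β, ∑ c : β, F s t a b c :=
        Finset.sum_congr rfl fun s _ => Finset.sum_congr rfl fun a _ => Finset.sum_comm
    _ = ∑ s : α, ∑ t : α, ∑ a : β, ∑ b : β, ∑ c : β, F s t a b c :=
        Finset.sum_congr rfl fun s _ => Finset.sum_comm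

lemma sum_comm4 {α β : Type} [Fintype α] [Fintype β] (F : α → α → β → β → ℂ) :
    ∑ a : β, ∑ b : β, ∑ s : α, ∑ t : α, F s t a b
      = ∑ s : α, ∑ t : α, ∑ a : β, ∑ b : β, F s t a b := by
  calc ∑ a : β, ∑ b : β, ∑ s : α, ∑ t : α, F s t a b
      = ∑ a : β, ∑ s : α, ∑ b : β, ∑ t : α, F s t a b :=
        Finset.sum_congr rfl fun a _ => Finset.sum_comm
    _ = ∑ s : α, ∑ a : β, ∑ b : β, ∑ t : α, F s t a b := Finset.sum_comm
    _ = ∑ s : α, ∑ a : β, ∑ t : α, ∑ b : β, F s t a b :=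
        Finset.sum_congr rfl fun s _ => Finset.sum_congr rfl fun a _ => Finset.sum_comm
    _ = ∑ s : α, ∑ t : α, ∑ a : β, ∑ b : β, F s t a b :=
        Finset.sum_congr rfl fun s _ => Finset.sum_comm

lemma push3 (x : ℂ) (G : (ι → Fin 2) → (ι → Fin 2) → (ι → Fin 2) → ℂ) :
    x * (∑ a, ∑ b, ∑ cc, G a b cc) = ∑ a, ∑ b, ∑ cc, x * G a b cc := by
  rw [Finset.mul_sum]; apply Finset.sum_congr rfl; intro a _
  rw [Finset.mul_sum]; apply Finset.sum_congr rfl; intro b _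
  rw [Finset.mul_sum]

lemma Ttrip_mid_zero (r t : ι → Fin 4) :
    Ttrip r 0 t = if r = t then (2:ℂ) ^ Fintype.card ι else 0 := by
  rw [Ttrip_eq_prod]
  have h : ∀ i : ι, tau (r i) ((0 : ι → Fin 4) i) (t i) = if r i = t i then 2 else 0 :=
    fun i => tau_mid_zero (r i) (t i)
  rw [Finset.prod_congr rfl (fun i _ => h i), prod_ite_eq_pow (fun i => r i = t i)]
  simp [funext_iff]

lemma Ttrip_right_zero (r s : ι → Fin 4) :
    Ttrip r s 0 = if r = s then (2:ℂ) ^ Fintype.card ι else 0 := by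
  rw [Ttrip_eq_prod]
  have h : ∀ i : ι, tau (r i) (s i) ((0 : ι → Fin 4) i) = if r i = s i then 2 else 0 :=
    fun i => tau_right_zero (r i) (s i)
  rw [Finset.prod_congr rfl (fun i _ => h i), prod_ite_eq_pow (fun i => r i = s i)]
  simp [funext_iff]

lemma core (hodd : Odd (Fintype.card ι)) (hpos : 0 < Fintype.card ι)
    (ρ : Matrix (ι → Fin 2) (ι → Fin 2) ℂ)
    (htr : ∑ a, ρ a a = 1)
    (hmarg : ∀ s : ι → Fin 4, s ≠ 0 → (∃ i, s i = 0) → trP s ρ = 0)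
    (hsq : ρ * ρ = (4 * ((2:ℂ) ^ Fintype.card ι)⁻¹) • ρ) : False := by
  have hne : Nonempty ι := Fintype.card_pos_iff.mp hpos
  obtain ⟨i₀⟩ := hne
  have hK : ((2:ℂ) ^ Fintype.card ι) ≠ 0 := pow_ne_zero _ two_ne_zero
  -- the coefficient of the identity is 1
  have c0 : trP (0 : ι → Fin 4) ρ = 1 := by
    unfold trP
    have h1 : ∀ a b : ι → Fin 2, Pm (0 : ι → Fin 4) a b * ρ b a
        = if a = b then ρ b a else 0 := by
      intro a b; rw [Pm_zero]; split_ifs <;> simp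
    calc ∑ a, ∑ b, Pm (0 : ι → Fin 4) a b * ρ b a
        = ∑ a : ι → Fin 2, ∑ b : ι → Fin 2, (if a = b then ρ b a else 0) :=
          Finset.sum_congr rfl fun a _ => Finset.sum_congr rfl fun b _ => h1 a b
      _ = ∑ a : ι → Fin 2, ρ a a := by
          apply Finset.sum_congr rfl; intro a _
          rw [Finset.sum_ite_eq Finset.univ a (fun b => ρ b a)]; simp
      _ = 1 := htr
  -- decomposition of the coefficients
  have hdec : ∀ s : ι → Fin 4, trP s ρ
      = (if s = 0 then 1 else 0) + (if (∀ i, s i ≠ 0) then trP s ρ else 0) := by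
    intro s
    by_cases h0 : s = 0
    · subst h0
      rw [if_pos rfl, if_neg (by push_neg; exact ⟨i₀, rfl⟩), add_zero, c0]
    · rw [if_neg h0, zero_add]
      by_cases hf : ∀ i, s i ≠ 0
      · rw [if_pos hf]
      · rw [if_neg hf]
        push_neg at hf
        exact hmarg s h0 hf
  -- master identity
  have master : ∀ r : ι → Fin 4,
      ∑ s : ι → Fin 4, ∑ t : ι → Fin 4, trP s ρ * trP t ρ * Ttrip r s t
        = ((2:ℂ) ^ Fintype.card ι) ^ 2 * ((4 * ((2:ℂ) ^ Fintype.card ι)⁻¹) * trP r ρ) := by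
    intro r
    have rhs1 : ∑ a : ι → Fin 2, ∑ b : ι → Fin 2, Pm r a b * (ρ * ρ) b a
        = (4 * ((2:ℂ) ^ Fintype.card ι)⁻¹) * trP r ρ := by
      rw [hsq]
      simp only [Matrix.smul_apply, smul_eq_mul]
      unfold trP
      rw [Finset.mul_sum]; apply Finset.sum_congr rfl; intro a _
      rw [Finset.mul_sum]; apply Finset.sum_congr rfl; intro b _; ring
    rw [← rhs1]
    calc ∑ s : ι → Fin 4, ∑ t : ι → Fin 4, trP s ρ * trP t ρ * Ttrip r s t
        = ∑ s : ι → Fin 4, ∑ t : ι → Fin 4, ∑ a : ι → Fin 2, ∑ b : ι → Fin 2, ∑ cc : ι → Fin 2,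
            trP s ρ * trP t ρ * (Pm r a b * Pm s b cc * Pm t cc a) := by
          apply Finset.sum_congr rfl; intro s _
          apply Finset.sum_congr rfl; intro t _
          rw [Ttrip, push3]
      _ = ∑ a : ι → Fin 2, ∑ b : ι → Fin 2, ∑ cc : ι → Fin 2, ∑ s : ι → Fin 4, ∑ t : ι → Fin 4,
            trP s ρ * trP t ρ * (Pm r a b * Pm s b cc * Pm t cc a) :=
          (sum_comm5 fun s t a b cc => trP s ρ * trP t ρ * (Pm r a b * Pm s b cc * Pm t cc a)).symm
      _ = ∑ a : ι → Fin 2, ∑ b : ι → Fin 2, ∑ cc : ι → Fin 2,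
            Pm r a b * ((∑ s : ι → Fin 4, trP s ρ * Pm s b cc) * (∑ t : ι → Fin 4, trP t ρ * Pm t cc a)) := by
          apply Finset.sum_congr rfl; intro a _
          apply Finset.sum_congr rfl; intro b _
          apply Finset.sum_congr rfl; intro cc _
          rw [Fintype.sum_mul_sum, Finset.mul_sum]
          apply Finset.sum_congr rfl; intro s _
          rw [Finset.mul_sum]
          apply Finset.sum_congr rfl; intro t _; ring
      _ = ∑ a : ι → Fin 2, ∑ b : ι → Fin 2, ∑ cc : ι → Fin 2,
            Pm r a b * (((2:ℂ) ^ Fintype.card ι * ρ b cc) * ((2:ℂ) ^ Fintype.card ι * ρ cc a)) := by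
          apply Finset.sum_congr rfl; intro a _
          apply Finset.sum_congr rfl; intro b _
          apply Finset.sum_congr rfl; intro cc _
          rw [Pm_expansion, Pm_expansion]
      _ = ((2:ℂ) ^ Fintype.card ι) ^ 2 * ∑ a : ι → Fin 2, ∑ b : ι → Fin 2, Pm r a b * (ρ * ρ) b a := by
          rw [Finset.mul_sum]; apply Finset.sum_congr rfl; intro a _
          rw [Finset.mul_sum]; apply Finset.sum_congr rfl; intro b _
          rw [Matrix.mul_apply, Finset.mul_sum, Finset.mul_sum]
          apply Finset.sum_congr rfl; intro cc _; ring
  -- evaluation of the master sum, for full-weight r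
  have split : ∀ r : ι → Fin 4, (∀ i, r i ≠ 0) →
      ∑ s : ι → Fin 4, ∑ t : ι → Fin 4, trP s ρ * trP t ρ * Ttrip r s t
        = 2 * ((2:ℂ) ^ Fintype.card ι) * trP r ρ := by
    intro r hr
    have expand : ∀ s t : ι → Fin 4, trP s ρ * trP t ρ * Ttrip r s t
        = (if s = 0 then 1 else 0) * (if t = 0 then 1 else 0) * Ttrip r s t
          + (if s = 0 then 1 else 0) * (if (∀ i, t i ≠ 0) then trP t ρ else 0) * Ttrip r s t
          + (if (∀ i, s i ≠ 0) then trP s ρ else 0) * (if t = 0 then 1 else 0) * Ttrip r s t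
          + (if (∀ i, s i ≠ 0) then trP s ρ else 0) * (if (∀ i, t i ≠ 0) then trP t ρ else 0) * Ttrip r s t := by
      have alg : ∀ x y A B C D T : ℂ, x = A + B → y = C + D →
          x * y * T = A * C * T + A * D * T + B * C * T + B * D * T := by
        intro x y A B C D T hx hy; subst hx; subst hy; ring
      intro s t
      exact alg _ _ _ _ _ _ _ (hdec s) (hdec t)
    rw [Finset.sum_congr rfl fun s _ => Finset.sum_congr rfl fun t _ => expand s t]
    simp only [Finset.sum_add_distrib]
    have T1 : ∑ s : ι → Fin 4, ∑ t : ι → Fin 4,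
        (if s = 0 then (1:ℂ) else 0) * (if t = 0 then 1 else 0) * Ttrip r s t = 0 := by
      rw [Finset.sum_eq_single (0 : ι → Fin 4)
        (fun s _ hs => Finset.sum_eq_zero fun t _ => by rw [if_neg hs]; ring) (by simp)]
      rw [Finset.sum_eq_single (0 : ι → Fin 4) (fun t _ ht => by rw [if_neg ht]; ring) (by simp)]
      simp only [if_pos rfl]
      rw [Ttrip_eq_prod, Finset.prod_eq_zero (Finset.mem_univ i₀) (tau_zeros (hr i₀))]
      ring
    have T2 : ∑ s : ι → Fin 4, ∑ t : ι → Fin 4,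
        (if s = 0 then (1:ℂ) else 0) * (if (∀ i, t i ≠ 0) then trP t ρ else 0) * Ttrip r s t
          = (2:ℂ) ^ Fintype.card ι * trP r ρ := by
      rw [Finset.sum_eq_single (0 : ι → Fin 4)
        (fun s _ hs => Finset.sum_eq_zero fun t _ => by rw [if_neg hs]; ring) (by simp)]
      have : ∀ t : ι → Fin 4,
          (if (0 : ι → Fin 4) = 0 then (1:ℂ) else 0) * (if (∀ i, t i ≠ 0) then trP t ρ else 0) * Ttrip r 0 t
            = (if (∀ i, t i ≠ 0) then trP t ρ else 0) * (if r = t then (2:ℂ) ^ Fintype.card ι else 0) := by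
        intro t; rw [if_pos rfl, Ttrip_mid_zero]; ring
      rw [Finset.sum_congr rfl fun t _ => this t]
      rw [Finset.sum_eq_single r
        (fun t _ ht => by rw [if_neg (show ¬ r = t from fun h => ht h.symm)]; ring) (by simp)]
      rw [if_pos rfl, if_pos hr]; ring
    have T3 : ∑ s : ι → Fin 4, ∑ t : ι → Fin 4,
        (if (∀ i, s i ≠ 0) then trP s ρ else 0) * (if t = 0 then (1:ℂ) else 0) * Ttrip r s t
          = (2:ℂ) ^ Fintype.card ι * trP r ρ := by
      have : ∀ s : ι → Fin 4, ∑ t : ι → Fin 4,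
          (if (∀ i, s i ≠ 0) then trP s ρ else 0) * (if t = 0 then (1:ℂ) else 0) * Ttrip r s t
            = (if (∀ i, s i ≠ 0) then trP s ρ else 0) * (if r = s then (2:ℂ) ^ Fintype.card ι else 0) := by
        intro s
        rw [Finset.sum_eq_single (0 : ι → Fin 4) (fun t _ ht => by rw [if_neg ht]; ring) (by simp)]
        rw [if_pos rfl, Ttrip_right_zero]; ring
      rw [Finset.sum_congr rfl fun s _ => this s]
      rw [Finset.sum_eq_single r
        (fun s _ hs => by rw [if_neg (show ¬ r = s from fun h => hs h.symm)]; ring) (by simp)]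
      rw [if_pos rfl, if_pos hr]; ring
    have T4 : ∑ s : ι → Fin 4, ∑ t : ι → Fin 4,
        (if (∀ i, s i ≠ 0) then trP s ρ else 0) * (if (∀ i, t i ≠ 0) then trP t ρ else 0) * Ttrip r s t
          = 0 := by
      set f : (ι → Fin 4) → (ι → Fin 4) → ℂ := fun s t =>
        (if (∀ i, s i ≠ 0) then trP s ρ else 0) * (if (∀ i, t i ≠ 0) then trP t ρ else 0) * Ttrip r s t
        with hf
      have hanti : ∀ s t, f s t = - f t s := by
        intro s t
        by_cases hs : ∀ i, s i ≠ 0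
        · by_cases ht : ∀ i, t i ≠ 0
          · have hT : Ttrip r s t = - Ttrip r t s := by
              rw [Ttrip_eq_prod, Ttrip_eq_prod,
                Finset.prod_congr rfl (fun i _ => tau_anti (hr i) (hs i) (ht i))]
              have : ∀ i : ι, -tau (r i) (t i) (s i) = (-1) * tau (r i) (t i) (s i) := by
                intro i; ring
              rw [Finset.prod_congr rfl (fun i _ => this i), Finset.prod_mul_distrib,
                Finset.prod_const]
              simp [Finset.card_univ, hodd.neg_one_pow]
            rw [hf]; simp only
            rw [if_pos hs, if_pos ht, hT]; ring
          · rw [hf]; simp only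
            rw [if_neg ht]; ring
        · rw [hf]; simp only
          rw [if_neg hs]; ring
      have hcomm : ∑ s : ι → Fin 4, ∑ t : ι → Fin 4, f s t
          = ∑ s : ι → Fin 4, ∑ t : ι → Fin 4, f t s := Finset.sum_comm
      have : ∑ s : ι → Fin 4, ∑ t : ι → Fin 4, f s t
          = - ∑ s : ι → Fin 4, ∑ t : ι → Fin 4, f s t := by
        nth_rewrite 2 [hcomm]
        rw [← Finset.sum_neg_distrib]
        apply Finset.sum_congr rfl; intro s _
        rw [← Finset.sum_neg_distrib]
        apply Finset.sum_congr rfl; intro t _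
        rw [hanti s t]
      exact CharZero.eq_neg_self_iff.mp this
    rw [T1, T2, T3, T4]; ring
  -- full-weight coefficients vanish
  have hfull : ∀ r : ι → Fin 4, (∀ i, r i ≠ 0) → trP r ρ = 0 := by
    intro r hr
    have h1 := (split r hr).symm.trans (master r)
    have h2 : ((2:ℂ) ^ Fintype.card ι) ^ 2 * ((4 * ((2:ℂ) ^ Fintype.card ι)⁻¹) * trP r ρ)
        = 4 * ((2:ℂ) ^ Fintype.card ι) * trP r ρ := by
      field_simp
    rw [h2] at h1
    have h3 : (2 * ((2:ℂ) ^ Fintype.card ι) - 4 * ((2:ℂ) ^ Fintype.card ι)) * trP r ρ = 0 := by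
      rw [sub_mul, h1]; ring
    have h4 : (2 * ((2:ℂ) ^ Fintype.card ι) - 4 * ((2:ℂ) ^ Fintype.card ι)) ≠ 0 := by
      intro h
      apply hK
      have : (2:ℂ) ^ Fintype.card ι * (-2) = 0 := by rw [← h]; ring
      rcases mul_eq_zero.mp this with h' | h'
      · exact h'
      · norm_num at h'
    exact (mul_eq_zero.mp h3).resolve_left h4
  -- purity computation
  have purity : ∑ s : ι → Fin 4, trP s ρ * trP s ρ = 4 := by
    have wayA : ∑ a : ι → Fin 2, ∑ b : ι → Fin 2,
        ((2:ℂ) ^ Fintype.card ι * ρ a b) * ((2:ℂ) ^ Fintype.card ι * ρ b a)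
          = ((2:ℂ) ^ Fintype.card ι) ^ 2 * (4 * ((2:ℂ) ^ Fintype.card ι)⁻¹) := by
      calc ∑ a : ι → Fin 2, ∑ b : ι → Fin 2,
          ((2:ℂ) ^ Fintype.card ι * ρ a b) * ((2:ℂ) ^ Fintype.card ι * ρ b a)
          = ((2:ℂ) ^ Fintype.card ι) ^ 2 * ∑ a : ι → Fin 2, (ρ * ρ) a a := by
            rw [Finset.mul_sum]; apply Finset.sum_congr rfl; intro a _
            rw [Matrix.mul_apply, Finset.mul_sum]
            apply Finset.sum_congr rfl; intro b _; ring
        _ = ((2:ℂ) ^ Fintype.card ι) ^ 2 * (4 * ((2:ℂ) ^ Fintype.card ι)⁻¹) := by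
            rw [hsq]
            simp only [Matrix.smul_apply, smul_eq_mul]
            rw [← Finset.mul_sum, htr, mul_one]
    have wayB : ∑ a : ι → Fin 2, ∑ b : ι → Fin 2,
        ((2:ℂ) ^ Fintype.card ι * ρ a b) * ((2:ℂ) ^ Fintype.card ι * ρ b a)
          = (2:ℂ) ^ Fintype.card ι * ∑ s : ι → Fin 4, trP s ρ * trP s ρ := by
      calc ∑ a : ι → Fin 2, ∑ b : ι → Fin 2,
          ((2:ℂ) ^ Fintype.card ι * ρ a b) * ((2:ℂ) ^ Fintype.card ι * ρ b a)
          = ∑ a : ι → Fin 2, ∑ b : ι → Fin 2, ∑ s : ι → Fin 4, ∑ t : ι → Fin 4,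
              trP s ρ * trP t ρ * (Pm s a b * Pm t b a) := by
            apply Finset.sum_congr rfl; intro a _
            apply Finset.sum_congr rfl; intro b _
            rw [← Pm_expansion ρ a b, ← Pm_expansion ρ b a, Fintype.sum_mul_sum]
            apply Finset.sum_congr rfl; intro s _
            apply Finset.sum_congr rfl; intro t _; ring
        _ = ∑ s : ι → Fin 4, ∑ t : ι → Fin 4, ∑ a : ι → Fin 2, ∑ b : ι → Fin 2,
              trP s ρ * trP t ρ * (Pm s a b * Pm t b a) :=
            sum_comm4 fun s t a b => trP s ρ * trP t ρ * (Pm s a b * Pm t b a)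
        _ = ∑ s : ι → Fin 4, ∑ t : ι → Fin 4,
              trP s ρ * trP t ρ * (if s = t then (2:ℂ) ^ Fintype.card ι else 0) := by
            apply Finset.sum_congr rfl; intro s _
            apply Finset.sum_congr rfl; intro t _
            rw [← Pm_orth s t, Finset.mul_sum]
            apply Finset.sum_congr rfl; intro a _
            rw [Finset.mul_sum]
        _ = (2:ℂ) ^ Fintype.card ι * ∑ s : ι → Fin 4, trP s ρ * trP s ρ := by
            rw [Finset.mul_sum]
            apply Finset.sum_congr rfl; intro s _
            rw [Finset.sum_eq_single s
              (fun t _ ht => by rw [if_neg (show ¬ s = t from fun h => ht h.symm)]; ring)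
              (by simp)]
            rw [if_pos rfl]; ring
    have := wayA.symm.trans wayB
    have h2 : ((2:ℂ) ^ Fintype.card ι) ^ 2 * (4 * ((2:ℂ) ^ Fintype.card ι)⁻¹)
        = (2:ℂ) ^ Fintype.card ι * 4 := by
      field_simp
    rw [h2] at this
    exact (mul_left_cancel₀ hK this).symm
  -- but the sum of squares is 1
  have hone : ∑ s : ι → Fin 4, trP s ρ * trP s ρ = 1 := by
    rw [Finset.sum_eq_single (0 : ι → Fin 4)]
    · rw [c0]; ring
    · intro s _ hs
      by_cases hf : ∀ i, s i ≠ 0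
      · rw [hfull s hf]; ring
      · push_neg at hf
        rw [hmarg s hs hf]; ring
    · simp
  rw [hone] at purity
  norm_num at purity

lemma trP_smul_one (β : ℂ) (s : ι → Fin 4) (hs : ∃ j, s j ≠ 0) :
    trP s (β • (1 : Matrix (ι → Fin 2) (ι → Fin 2) ℂ)) = 0 := by
  obtain ⟨j₀, hj₀⟩ := hs
  unfold trP
  have h1 : ∀ a b : ι → Fin 2, Pm s a b * (β • (1 : Matrix (ι → Fin 2) (ι → Fin 2) ℂ)) b a
      = if b = a then β * Pm s a b else 0 := by
    intro a b
    simp only [Matrix.smul_apply, Matrix.one_apply, smul_eq_mul]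
    split_ifs <;> ring
  calc ∑ a : ι → Fin 2, ∑ b : ι → Fin 2, Pm s a b * (β • (1 : Matrix (ι → Fin 2) (ι → Fin 2) ℂ)) b a
      = ∑ a : ι → Fin 2, ∑ b : ι → Fin 2, (if b = a then β * Pm s a b else 0) :=
        Finset.sum_congr rfl fun a _ => Finset.sum_congr rfl fun b _ => h1 a b
    _ = ∑ a : ι → Fin 2, β * Pm s a a := by
        apply Finset.sum_congr rfl; intro a _
        rw [Finset.sum_ite_eq' Finset.univ a (fun b => β * Pm s a b)]; simp
    _ = β * ∑ a : ι → Fin 2, Pm s a a := by rw [Finset.mul_sum]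
    _ = 0 := by
        have h2 : ∑ a : ι → Fin 2, Pm s a a
            = ∏ i, ∑ x : Fin 2, pauli (s i) x x := by
          rw [Fintype.prod_sum (fun (i : ι) (x : Fin 2) => pauli (s i) x x)]
          rfl
        rw [h2, Finset.prod_eq_zero (Finset.mem_univ j₀) (pauli_tr hj₀)]
        ring

end Multi

section Geometry
open Matrix in
lemma two_pow_ne' (k : ℕ) : ((2:ℂ) ^ k) ≠ 0 := pow_ne_zero _ two_ne_zero

open Matrix
variable {n : ℕ}

def glueEquiv (S : Finset (Fin n)) :
    ({x // x ∈ S} → Fin 2) × ({x // x ∈ Sᶜ} → Fin 2) ≃ (Fin n → Fin 2) where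
  toFun p := glue S p.1 p.2
  invFun f := (fun j => f j, fun j => f j)
  left_inv p := by
    obtain ⟨a, b⟩ := p
    dsimp only
    have h1 : (fun j : {x // x ∈ S} => glue S a b ↑j) = a := by
      funext j
      simp only [glue, dif_pos j.2]
    have h2 : (fun j : {x // x ∈ Sᶜ} => glue S a b ↑j) = b := by
      funext j
      simp only [glue, dif_neg (Finset.mem_compl.mp j.2)]
    rw [h1, h2]
  right_inv f := by
    funext j
    by_cases h : j ∈ S
    · simp only [glue, dif_pos h]
    · simp only [glue, dif_neg h]

lemma trace_reduced (ψ : (Fin n → Fin 2) → ℂ) (S : Finset (Fin n)) :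
    ∑ a, reduced ψ S a a = ∑ x : Fin n → Fin 2, ψ x * star (ψ x) := by
  rw [← Equiv.sum_comp (glueEquiv S) (fun x => ψ x * star (ψ x)), Fintype.sum_prod_type]
  rfl

/-- the "purification" matrix -/
noncomputable def Mmat (ψ : (Fin n → Fin 2) → ℂ) (S : Finset (Fin n)) :
    Matrix ({x // x ∈ S} → Fin 2) ({x // x ∈ Sᶜ} → Fin 2) ℂ :=
  Matrix.of fun a c => ψ (glue S a c)

lemma reduced_eq_mul (ψ : (Fin n → Fin 2) → ℂ) (S : Finset (Fin n)) :
    reduced ψ S = Mmat ψ S * (Mmat ψ S)ᴴ := by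
  ext a b
  simp [reduced, Mmat, Matrix.mul_apply, Matrix.conjTranspose_apply]

lemma glue_compl (S : Finset (Fin n)) (c : {x // x ∈ Sᶜ} → Fin 2)
    (a' : {x // x ∈ Sᶜᶜ} → Fin 2) :
    glue Sᶜ c a' = glue S (fun j => a' ⟨j.1, by simp [j.2]⟩) c := by
  funext i
  by_cases h : i ∈ S
  · rw [glue, dif_neg (by simp [h]), glue, dif_pos h]
  · rw [glue, dif_pos (Finset.mem_compl.mpr h), glue, dif_neg h]

lemma compl_entries (ψ : (Fin n → Fin 2) → ℂ) (S : Finset (Fin n))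
    (c d : {x // x ∈ Sᶜ} → Fin 2) :
    ((Mmat ψ S)ᴴ * Mmat ψ S) c d = star (reduced ψ Sᶜ c d) := by
  have hmem : ∀ x : Fin n, x ∈ S → x ∈ Sᶜᶜ := fun x hx => by simp [hx]
  let E : ({x // x ∈ Sᶜᶜ} → Fin 2) ≃ ({x // x ∈ S} → Fin 2) :=
  { toFun := fun a' j => a' ⟨j.1, hmem j.1 j.2⟩
    invFun := fun jf y => jf ⟨y.1, by simpa using y.2⟩
    left_inv := fun a' => funext fun y => rfl
    right_inv := fun jf => funext fun j => rfl }
  have key : ∀ (a' : {x // x ∈ Sᶜᶜ} → Fin 2) (jf : {x // x ∈ S} → Fin 2),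
      (∀ (x : Fin n) (hx : x ∈ S), a' ⟨x, hmem x hx⟩ = jf ⟨x, hx⟩) →
      ∀ cc : {x // x ∈ Sᶜ} → Fin 2, glue Sᶜ cc a' = glue S jf cc := by
    intro a' jf hj cc
    funext i
    by_cases h : i ∈ S
    · rw [glue, glue]
      rw [dif_neg (by simp [h]), dif_pos h]
      exact hj i h
    · rw [glue, glue]
      rw [dif_pos (Finset.mem_compl.mpr h), dif_neg h]
  rw [Matrix.mul_apply]
  rw [show reduced ψ Sᶜ c d
    = ∑ a' : {x // x ∈ Sᶜᶜ} → Fin 2, ψ (glue Sᶜ c a') * star (ψ (glue Sᶜ d a')) from rfl,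
    star_sum]
  apply Fintype.sum_equiv E.symm
  intro j
  rw [key (E.symm j) j (fun x hx => rfl) c, key (E.symm j) j (fun x hx => rfl) d]
  simp only [Matrix.conjTranspose_apply, Mmat, Matrix.of_apply, star_mul', star_star]

lemma maxmixed_compl (ψ : (Fin n → Fin 2) → ℂ) (S : Finset (Fin n))
    (hcard : S.card = Sᶜ.card) (h : IsMaxMixed ψ S) : IsMaxMixed ψ Sᶜ := by
  have hβ : ((2 : ℂ) ^ S.card)⁻¹ ≠ 0 := by
    simp [pow_ne_zero]
  have hMM : Mmat ψ S * (Mmat ψ S)ᴴ = ((2 : ℂ) ^ S.card)⁻¹ • 1 := by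
    rw [← reduced_eq_mul]; exact h
  have hcard2 : Fintype.card ({x // x ∈ Sᶜ} → Fin 2)
      = Fintype.card ({x // x ∈ S} → Fin 2) := by
    rw [Fintype.card_fun, Fintype.card_fun, Fintype.card_coe, Fintype.card_coe, hcard]
  let e : ({x // x ∈ Sᶜ} → Fin 2) ≃ ({x // x ∈ S} → Fin 2) := Fintype.equivOfCardEq hcard2
  set N := (Mmat ψ S).submatrix id e.symm with hN
  have hNN : N * Nᴴ = ((2 : ℂ) ^ S.card)⁻¹ • 1 := by
    rw [hN, Matrix.conjTranspose_submatrix, Matrix.submatrix_mul_equiv, hMM]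
    rfl
  have hNN2 : Nᴴ * N = ((2 : ℂ) ^ S.card)⁻¹ • 1 := by
    have h1 : N * (((2:ℂ) ^ S.card) • Nᴴ) = 1 := by
      rw [Matrix.mul_smul, hNN, smul_smul, mul_inv_cancel₀ (two_pow_ne' _), one_smul]
    have h2 := mul_eq_one_comm.mp h1
    rw [Matrix.smul_mul] at h2
    calc Nᴴ * N = ((2:ℂ) ^ S.card)⁻¹ • (((2:ℂ) ^ S.card) • (Nᴴ * N)) := by
          rw [smul_smul, inv_mul_cancel₀ (two_pow_ne' _), one_smul]
      _ = ((2:ℂ) ^ S.card)⁻¹ • (1 : Matrix ({x // x ∈ S} → Fin 2) ({x // x ∈ S} → Fin 2) ℂ) := by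
          rw [h2]
  have h3 : (((Mmat ψ S)ᴴ * Mmat ψ S)).submatrix ⇑e.symm ⇑e.symm
      = ((2 : ℂ) ^ S.card)⁻¹ • 1 := by
    rw [← Matrix.submatrix_mul_equiv ((Mmat ψ S)ᴴ) (Mmat ψ S) ⇑e.symm (Equiv.refl _) ⇑e.symm]
    simp only [Equiv.coe_refl]
    rw [← Matrix.conjTranspose_submatrix]
    exact hNN2
  have hMM2 : ∀ c d : {x // x ∈ Sᶜ} → Fin 2,
      ((Mmat ψ S)ᴴ * Mmat ψ S) c d
        = ((2 : ℂ) ^ S.card)⁻¹ * (if c = d then 1 else 0) := by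
    intro c d
    have h4 := congrFun (congrFun h3 (e c)) (e d)
    simp only [Matrix.submatrix_apply, Equiv.symm_apply_apply, Matrix.smul_apply,
      Matrix.one_apply, smul_eq_mul] at h4
    rw [h4]
    congr 1
    simp [EmbeddingLike.apply_eq_iff_eq]
  unfold IsMaxMixed
  ext c d
  have h5 : reduced ψ Sᶜ c d = star (((Mmat ψ S)ᴴ * Mmat ψ S) c d) := by
    rw [compl_entries, star_star]
  rw [h5, hMM2 c d]
  have h6 : star (((2:ℂ) ^ S.card)⁻¹ * (if c = d then 1 else 0))
      = ((2:ℂ) ^ S.card)⁻¹ * (if c = d then (1:ℂ) else 0) := by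
    split_ifs <;> simp
  rw [h6]
  simp only [Matrix.smul_apply, Matrix.one_apply, smul_eq_mul, hcard]

def extA (S : Finset (Fin n)) (i : Fin n) (a : {x // x ∈ S.erase i} → Fin 2) (x : Fin 2) :
    {x // x ∈ S} → Fin 2 :=
  fun j => if h : (j : Fin n) ∈ S.erase i then a ⟨j, h⟩ else x

def eraseEquiv (S : Finset (Fin n)) (i : Fin n) (hi : i ∈ S) :
    Fin 2 × ({x // x ∈ Sᶜ} → Fin 2) ≃ ({x // x ∈ (S.erase i)ᶜ} → Fin 2) where
  toFun p := fun j => if h : (j : Fin n) ∈ Sᶜ then p.2 ⟨j, h⟩ else p.1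
  invFun c := (c ⟨i, by simp⟩, fun j => c ⟨j.1, by
      have h2 := Finset.mem_compl.mp j.2
      exact Finset.mem_compl.mpr (fun hmem => h2 (Finset.mem_of_mem_erase hmem))⟩)
  left_inv p := by
    obtain ⟨x, e⟩ := p
    dsimp only
    refine Prod.ext ?_ ?_
    · show (if h : i ∈ Sᶜ then e ⟨i, h⟩ else x) = x
      rw [dif_neg (by simp [hi])]
    · funext j
      show (if h : (j : Fin n) ∈ Sᶜ then e ⟨j, h⟩ else x) = e j
      rw [dif_pos j.2]
  right_inv c := by
    funext j
    dsimp only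
    by_cases h : (j : Fin n) ∈ Sᶜ
    · rw [dif_pos h]
    · rw [dif_neg h]
      have h3 : (j : Fin n) ∈ S := by
        by_contra h4
        exact h (Finset.mem_compl.mpr h4)
      have h4 := Finset.mem_compl.mp j.2
      have hj : (j : Fin n) = i := by
        by_contra hne
        exact h4 (Finset.mem_erase.mpr ⟨hne, h3⟩)
      exact congrArg c (Subtype.ext hj.symm)

lemma reduced_erase (ψ : (Fin n → Fin 2) → ℂ) (S : Finset (Fin n)) (i : Fin n)
    (hi : i ∈ S) (a b : {x // x ∈ S.erase i} → Fin 2) :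
    reduced ψ (S.erase i) a b = ∑ x : Fin 2, reduced ψ S (extA S i a x) (extA S i b x) := by
  have hglue : ∀ (aa : {x // x ∈ S.erase i} → Fin 2) (x : Fin 2) (e : {x // x ∈ Sᶜ} → Fin 2),
      glue (S.erase i) aa (eraseEquiv S i hi (x, e)) = glue S (extA S i aa x) e := by
    intro aa x e
    funext jj
    by_cases h1 : jj ∈ S.erase i
    · rw [glue, glue]
      rw [dif_pos h1, dif_pos (Finset.mem_of_mem_erase h1)]
      show aa ⟨jj, h1⟩ = extA S i aa x ⟨jj, _⟩
      rw [extA]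
      rw [dif_pos h1]
    · by_cases h2 : jj ∈ S
      · rw [glue, glue]
        rw [dif_neg (fun hh => h1 hh), dif_pos h2]
        show (if h : jj ∈ Sᶜ then e ⟨jj, h⟩ else x) = extA S i aa x ⟨jj, h2⟩
        rw [dif_neg (by simp [h2]), extA, dif_neg h1]
      · rw [glue, glue]
        rw [dif_neg (fun hh => h1 hh), dif_neg h2]
        show (if h : jj ∈ Sᶜ then e ⟨jj, h⟩ else x) = e ⟨jj, _⟩
        rw [dif_pos (Finset.mem_compl.mpr h2)]
  rw [show reduced ψ (S.erase i) a b = ∑ c : {x // x ∈ (S.erase i)ᶜ} → Fin 2,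
      ψ (glue (S.erase i) a c) * star (ψ (glue (S.erase i) b c)) from rfl]
  rw [← Equiv.sum_comp (eraseEquiv S i hi)
    (fun c => ψ (glue (S.erase i) a c) * star (ψ (glue (S.erase i) b c)))]
  rw [Fintype.sum_prod_type]
  apply Finset.sum_congr rfl; intro x _
  rw [show reduced ψ S (extA S i a x) (extA S i b x) = ∑ e : {x // x ∈ Sᶜ} → Fin 2,
      ψ (glue S (extA S i a x) e) * star (ψ (glue S (extA S i b x) e)) from rfl]
  apply Finset.sum_congr rfl; intro e _
  rw [hglue a x e, hglue b x e]

lemma extA_inj (S : Finset (Fin n)) (i : Fin n) (a b : {x // x ∈ S.erase i} → Fin 2)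
    (x : Fin 2) : extA S i a x = extA S i b x ↔ a = b := by
  constructor
  · intro hEq
    funext j
    have h2 : ∀ c : {x // x ∈ S.erase i} → Fin 2,
        extA S i c x ⟨j.1, Finset.mem_of_mem_erase j.2⟩ = c j := by
      intro c
      show (if h : (j : Fin n) ∈ S.erase i then c ⟨j, h⟩ else x) = c j
      rw [dif_pos j.2]
    have h1 := congrFun hEq ⟨j.1, Finset.mem_of_mem_erase j.2⟩
    rw [h2 a, h2 b] at h1
    exact h1
  · intro hEq; rw [hEq]

lemma maxmixed_erase (ψ : (Fin n → Fin 2) → ℂ) {S : Finset (Fin n)} {i : Fin n}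
    (hi : i ∈ S) (h : IsMaxMixed ψ S) : IsMaxMixed ψ (S.erase i) := by
  have hcard : S.card = (S.erase i).card + 1 := by
    have h1 := Finset.card_erase_of_mem hi
    have h2 : 1 ≤ S.card := Finset.card_pos.mpr ⟨i, hi⟩
    omega
  unfold IsMaxMixed at h ⊢
  ext a b
  rw [reduced_erase ψ S i hi a b]
  have hval : ∀ x : Fin 2, reduced ψ S (extA S i a x) (extA S i b x)
      = ((2:ℂ) ^ S.card)⁻¹ * (if a = b then 1 else 0) := by
    intro x
    rw [h]
    simp only [Matrix.smul_apply, Matrix.one_apply, smul_eq_mul]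
    congr 1
    simp [extA_inj]
  rw [Finset.sum_congr rfl (fun x _ => hval x)]
  rw [Finset.sum_const, Finset.card_univ, Fintype.card_fin]
  have hpow : (2:ℂ) * ((2:ℂ) ^ S.card)⁻¹ = ((2:ℂ) ^ (S.erase i).card)⁻¹ := by
    rw [hcard, pow_succ]
    have := two_pow_ne' (S.erase i).card
    field_simp
  simp only [Matrix.smul_apply, Matrix.one_apply, smul_eq_mul, nsmul_eq_mul]
  push_cast
  rw [← hpow]
  ring

lemma prod_split (S : Finset (Fin n)) (i : Fin n) (hi : i ∈ S) (f : {x // x ∈ S} → ℂ) :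
    ∏ j : {x // x ∈ S}, f j
      = f ⟨i, hi⟩ * ∏ j : {x // x ∈ S.erase i}, f ⟨j.1, Finset.mem_of_mem_erase j.2⟩ := by
  rw [← Finset.mul_prod_erase Finset.univ f (Finset.mem_univ ⟨i, hi⟩)]
  congr 1
  exact Finset.prod_bij'
    (fun (A : {x // x ∈ S}) (hA : A ∈ Finset.univ.erase ⟨i, hi⟩) =>
      (⟨A.1, Finset.mem_erase.mpr
        ⟨fun hv => (Finset.mem_erase.mp hA).1 (Subtype.ext hv), A.2⟩⟩ : {x // x ∈ S.erase i}))
    (fun (B : {x // x ∈ S.erase i}) _ =>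
      (⟨B.1, Finset.mem_of_mem_erase B.2⟩ : {x // x ∈ S}))
    (fun A hA => Finset.mem_univ _)
    (fun B hB => Finset.mem_erase.mpr
      ⟨fun hEq => (Finset.mem_erase.mp B.2).1 (congrArg Subtype.val hEq), Finset.mem_univ _⟩)
    (fun A hA => rfl)
    (fun B hB => rfl)
    (fun A hA => rfl)

def extEquiv (S : Finset (Fin n)) (i : Fin n) (hi : i ∈ S) :
    ({x // x ∈ S.erase i} → Fin 2) × Fin 2 ≃ ({x // x ∈ S} → Fin 2) where
  toFun p := extA S i p.1 p.2
  invFun A := (fun j => A ⟨j.1, Finset.mem_of_mem_erase j.2⟩, A ⟨i, hi⟩)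
  left_inv p := by
    obtain ⟨a, x⟩ := p
    dsimp only
    refine Prod.ext ?_ ?_
    · funext j
      show (if h : (j : Fin n) ∈ S.erase i then a ⟨j, h⟩ else x) = a j
      rw [dif_pos j.2]
    · show (if h : i ∈ S.erase i then a ⟨i, h⟩ else x) = x
      rw [dif_neg (Finset.notMem_erase i S)]
  right_inv A := by
    funext j
    show (if h : (j : Fin n) ∈ S.erase i
      then A ⟨j, Finset.mem_of_mem_erase h⟩ else A ⟨i, hi⟩) = A j
    by_cases h : (j : Fin n) ∈ S.erase i
    · rw [dif_pos h]
    · rw [dif_neg h]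
      have h3 : (j : Fin n) = i := by
        by_contra hne
        exact h (Finset.mem_erase.mpr ⟨hne, j.2⟩)
      exact congrArg A (Subtype.ext h3.symm)

lemma trP_strip (ψ : (Fin n → Fin 2) → ℂ) (S : Finset (Fin n)) (i : Fin n) (hi : i ∈ S)
    (s : {x // x ∈ S} → Fin 4) (hs : s ⟨i, hi⟩ = 0) :
    trP s (reduced ψ S)
      = trP (fun j => s ⟨j.1, Finset.mem_of_mem_erase j.2⟩) (reduced ψ (S.erase i)) := by
  have hPm : ∀ (a b : {x // x ∈ S.erase i} → Fin 2) (x y : Fin 2),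
      Pm s (extA S i a x) (extA S i b y)
        = (if x = y then 1 else 0)
            * Pm (fun j => s ⟨j.1, Finset.mem_of_mem_erase j.2⟩) a b := by
    intro a b x y
    rw [Pm, prod_split S i hi (f := fun j => pauli (s j) (extA S i a x j) (extA S i b y j))]
    congr 1
    · have h1 : extA S i a x ⟨i, hi⟩ = x := by
        show (if h : i ∈ S.erase i then a ⟨i, h⟩ else x) = x
        rw [dif_neg (Finset.notMem_erase i S)]
      have h2 : extA S i b y ⟨i, hi⟩ = y := by
        show (if h : i ∈ S.erase i then b ⟨i, h⟩ else y) = y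
        rw [dif_neg (Finset.notMem_erase i S)]
      rw [hs, h1, h2, pauli_zero]
    · rw [Pm]
      apply Finset.prod_congr rfl
      intro j _
      have h1 : extA S i a x ⟨j.1, Finset.mem_of_mem_erase j.2⟩ = a j := by
        show (if h : (j : Fin n) ∈ S.erase i then a ⟨j, h⟩ else x) = a j
        rw [dif_pos j.2]
      have h2 : extA S i b y ⟨j.1, Finset.mem_of_mem_erase j.2⟩ = b j := by
        show (if h : (j : Fin n) ∈ S.erase i then b ⟨j, h⟩ else y) = b j
        rw [dif_pos j.2]
      rw [h1, h2]
  rw [trP, trP]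
  rw [← Equiv.sum_comp (extEquiv S i hi)
    (fun A => ∑ B, Pm s A B * reduced ψ S B A)]
  have hinner : ∀ p : ({x // x ∈ S.erase i} → Fin 2) × Fin 2,
      (∑ B : {x // x ∈ S} → Fin 2,
        Pm s (extEquiv S i hi p) B * reduced ψ S B (extEquiv S i hi p))
        = ∑ q : ({x // x ∈ S.erase i} → Fin 2) × Fin 2,
            Pm s (extEquiv S i hi p) (extEquiv S i hi q)
              * reduced ψ S (extEquiv S i hi q) (extEquiv S i hi p) :=
    fun p => (Equiv.sum_comp (extEquiv S i hi)
      (fun B => Pm s (extEquiv S i hi p) B * reduced ψ S B (extEquiv S i hi p))).symm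
  rw [Finset.sum_congr rfl (fun p _ => hinner p)]
  rw [Fintype.sum_prod_type]
  apply Finset.sum_congr rfl; intro a _
  have hstep : ∀ x : Fin 2,
      (∑ q : ({x // x ∈ S.erase i} → Fin 2) × Fin 2,
        Pm s (extEquiv S i hi (a, x)) (extEquiv S i hi q)
          * reduced ψ S (extEquiv S i hi q) (extEquiv S i hi (a, x)))
        = ∑ b : {x // x ∈ S.erase i} → Fin 2,
            Pm (fun j => s ⟨j.1, Finset.mem_of_mem_erase j.2⟩) a b
              * reduced ψ S (extA S i b x) (extA S i a x) := by
    intro x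
    rw [Fintype.sum_prod_type]
    have h1 : ∀ b : {x // x ∈ S.erase i} → Fin 2, ∀ y : Fin 2,
        Pm s (extEquiv S i hi (a, x)) (extEquiv S i hi (b, y))
          * reduced ψ S (extEquiv S i hi (b, y)) (extEquiv S i hi (a, x))
          = if x = y then Pm (fun j => s ⟨j.1, Finset.mem_of_mem_erase j.2⟩) a b
              * reduced ψ S (extA S i b y) (extA S i a x) else 0 := by
      intro b y
      show Pm s (extA S i a x) (extA S i b y) * reduced ψ S (extA S i b y) (extA S i a x) = _
      rw [hPm a b x y]
      split_ifs <;> ring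
    rw [Finset.sum_congr rfl (fun b _ => Finset.sum_congr rfl (fun y _ => h1 b y))]
    apply Finset.sum_congr rfl; intro b _
    rw [Finset.sum_ite_eq Finset.univ x (fun y =>
      Pm (fun j => s ⟨j.1, Finset.mem_of_mem_erase j.2⟩) a b
        * reduced ψ S (extA S i b y) (extA S i a x))]
    simp
  rw [Finset.sum_congr rfl (fun x _ => hstep x)]
  rw [Finset.sum_comm]
  apply Finset.sum_congr rfl; intro b _
  rw [← Finset.mul_sum]
  congr 1
  rw [reduced_erase ψ S i hi b a]

end Geometry

open Matrix

/-- For an `n = 4m`-qubit pure state with `m ≥ 2`: every `(2m+1)`-set of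
parties `A` contains a `2m`-subset `B` whose reduction is not maximally mixed. -/
theorem stmt14 (m : ℕ) (hm : 2 ≤ m)
    (ψ : (Fin (4 * m) → Fin 2) → ℂ)
    (hψ : ∑ c : Fin (4 * m) → Fin 2, ‖ψ c‖ ^ 2 = 1)
    (A : Finset (Fin (4 * m))) (hA : A.card = 2 * m + 1) :
    ∃ B ⊆ A, B.card = 2 * m ∧ ¬ IsMaxMixed ψ B := by
  by_contra hcon
  push_neg at hcon
  -- every (2m)-subset of A is maximally mixed
  have hmm : ∀ i ∈ A, IsMaxMixed ψ (A.erase i) := by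
    intro i hi
    apply hcon _ (Finset.erase_subset i A)
    rw [Finset.card_erase_of_mem hi, hA]
    omega
  obtain ⟨i₀, hi₀⟩ : A.Nonempty := Finset.card_pos.mp (by rw [hA]; omega)
  -- the complement of A is maximally mixed
  have hc1 : IsMaxMixed ψ ((A.erase i₀)ᶜ) := by
    apply maxmixed_compl
    · rw [Finset.card_compl, Finset.card_erase_of_mem hi₀, hA, Fintype.card_fin]
      omega
    · exact hmm i₀ hi₀
  have hi₀c : i₀ ∈ (A.erase i₀)ᶜ := Finset.mem_compl.mpr (Finset.notMem_erase _ _)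
  have hc2 : IsMaxMixed ψ (((A.erase i₀)ᶜ).erase i₀) := maxmixed_erase ψ hi₀c hc1
  have hsetEq : ((A.erase i₀)ᶜ).erase i₀ = Aᶜ := by
    ext x
    by_cases hx : x = i₀ <;>
      simp [Finset.mem_erase, Finset.mem_compl, hx, hi₀]
  rw [hsetEq] at hc2
  have hc2' : reduced ψ Aᶜ = ((2 : ℂ) ^ Aᶜ.card)⁻¹ • 1 := hc2
  -- the square relation
  have hAc : Aᶜ.card = 2 * m - 1 := by
    rw [Finset.card_compl, hA, Fintype.card_fin]
    omega
  have hsq : reduced ψ A * reduced ψ A = ((2:ℂ) ^ (Aᶜ.card))⁻¹ • reduced ψ A := by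
    have hMM : (Mmat ψ A)ᴴ * Mmat ψ A = ((2:ℂ) ^ (Aᶜ.card))⁻¹ • 1 := by
      ext c d
      rw [compl_entries ψ A c d, hc2']
      simp only [Matrix.smul_apply, Matrix.one_apply, smul_eq_mul]
      split_ifs <;> simp
    calc reduced ψ A * reduced ψ A
        = Mmat ψ A * ((Mmat ψ A)ᴴ * Mmat ψ A) * (Mmat ψ A)ᴴ := by
          rw [reduced_eq_mul]
          rw [Matrix.mul_assoc (Mmat ψ A), ← Matrix.mul_assoc ((Mmat ψ A)ᴴ),
            ← Matrix.mul_assoc, ← Matrix.mul_assoc]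
      _ = ((2:ℂ) ^ (Aᶜ.card))⁻¹ • reduced ψ A := by
          rw [hMM, Matrix.mul_smul, Matrix.mul_one, Matrix.smul_mul, reduced_eq_mul]
  have hcardA : Fintype.card {x // x ∈ A} = 2 * m + 1 := by
    rw [Fintype.card_coe, hA]
  -- trace is one
  have htr : ∑ a, reduced ψ A a a = 1 := by
    rw [trace_reduced]
    have h1 : ∀ x, ψ x * star (ψ x) = ((‖ψ x‖ ^ 2 : ℝ) : ℂ) := by
      intro x
      rw [Complex.star_def, Complex.mul_conj, Complex.sq_norm]
    rw [Finset.sum_congr rfl (fun x _ => h1 x), ← Complex.ofReal_sum, hψ]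
    simp
  -- marginal conditions
  have hmarg : ∀ s : {x // x ∈ A} → Fin 4, s ≠ 0 → (∃ i, s i = 0) →
      trP s (reduced ψ A) = 0 := by
    intro s hs0 hex
    obtain ⟨idx, hidx⟩ := hex
    have hstrip := trP_strip ψ A ↑idx idx.2 s hidx
    rw [hstrip]
    have hmix : reduced ψ (A.erase ↑idx) = ((2:ℂ) ^ (A.erase (idx:Fin (4*m))).card)⁻¹ • 1 :=
      hmm ↑idx idx.2
    rw [hmix]
    apply trP_smul_one
    obtain ⟨idx2, hidx2⟩ : ∃ j, s j ≠ 0 := by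
      by_contra hno
      push_neg at hno
      exact hs0 (funext hno)
    have hne : (idx2 : Fin (4*m)) ≠ ↑idx := by
      intro hEq
      exact hidx2 (by rw [show idx2 = idx from Subtype.ext hEq, hidx])
    exact ⟨⟨idx2.1, Finset.mem_erase.mpr ⟨hne, idx2.2⟩⟩, hidx2⟩
  -- conclude via the core lemma
  apply core (ι := {x // x ∈ A}) (ρ := reduced ψ A) _ _ htr hmarg
  · -- the square hypothesis in the core's normal form
    rw [hsq, hcardA, hAc]
    congr 1
    have h1 : (2:ℂ)^(2*m+1) = (2:ℂ)^(2*m-1) * 4 := by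
      rw [show 2*m+1 = (2*m-1)+2 by omega, pow_add]
      norm_num
    rw [h1]
    rw [mul_inv]
    have h4 : ((4:ℂ))⁻¹ * 4 = 1 := by norm_num
    field_simp
  · rw [hcardA]; exact ⟨m, by ring⟩
  · rw [hcardA]; omega
end

section
/- Let |ψ⟩ be an n-qubit pure state and s < k ≤ ⌊n/2⌋. If the number of k-subsets K ⊆ [n] whose reduction ρ_K is maximally mixed exceeds C(n,k) − C(n−s, k−s), then every s-party reduction of |ψ⟩ is maximally mixed (i.e., |ψ⟩ is s-uniform). -/
-- choose antitone
lemma choose_step (n k t : ℕ) (ht : t < k) (hkn : k ≤ n) :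
    (n - (t+1)).choose (k - (t+1)) ≤ (n - t).choose (k - t) := by
  have h1 : n - t = (n - (t+1)) + 1 := by omega
  have h2 : k - t = (k - (t+1)) + 1 := by omega
  rw [h1, h2, Nat.choose_succ_succ]
  exact Nat.le_add_right _ _

lemma choose_anti (n k : ℕ) (hkn : k ≤ n) :
    ∀ s, s ≤ k → ∀ t, t ≤ s → (n - s).choose (k - s) ≤ (n - t).choose (k - t) := by
  intro s
  induction s with
  | zero => intro _ t ht; obtain rfl := Nat.le_zero.mp ht; exact le_rfl
  | succ m ih =>
    intro hs t ht
    rcases Nat.eq_or_lt_of_le ht with rfl | hlt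
    · exact le_rfl
    · exact le_trans (choose_step n k m (by omega) hkn) (ih (by omega) t (by omega))

lemma card_supersets (n : ℕ) (S : Finset (Fin n)) (k : ℕ) (hS : S.card ≤ k) :
    (((Finset.univ : Finset (Fin n)).powersetCard k).filter (fun K => S ⊆ K)).card
      = (n - S.card).choose (k - S.card) := by
  have : (((Finset.univ : Finset (Fin n)).powersetCard k).filter (fun K => S ⊆ K)).card
      = (Sᶜ.powersetCard (k - S.card)).card := by
    apply Finset.card_bij' (fun K _ => K \ S) (fun T _ => T ∪ S)
    · intro K hK
      simp only [Finset.mem_filter, Finset.mem_powersetCard] at hK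
      obtain ⟨⟨_, hcard⟩, hSK⟩ := hK
      simp only [Finset.mem_powersetCard]
      constructor
      · intro x hx
        simp only [Finset.mem_sdiff] at hx
        exact Finset.mem_compl.mpr hx.2
      · rw [Finset.card_sdiff_of_subset hSK, hcard]
    · intro T hT
      simp only [Finset.mem_powersetCard] at hT
      obtain ⟨hTc, hcard⟩ := hT
      have hdisj : Disjoint T S := by
        rw [Finset.disjoint_left]
        intro x hx hxS
        exact Finset.mem_compl.mp (hTc hx) hxS
      simp only [Finset.mem_filter, Finset.mem_powersetCard]
      refine ⟨⟨Finset.subset_univ _, ?_⟩, Finset.subset_union_right⟩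
      rw [Finset.card_union_of_disjoint hdisj, hcard]
      omega
    · intro K hK
      simp only [Finset.mem_filter, Finset.mem_powersetCard] at hK
      exact Finset.sdiff_union_of_subset hK.2
    · intro T hT
      simp only [Finset.mem_powersetCard] at hT
      have hdisj : Disjoint T S := by
        rw [Finset.disjoint_left]
        intro x hx hxS
        exact Finset.mem_compl.mp (hT.1 hx) hxS
      rw [Finset.union_sdiff_right, Finset.sdiff_eq_self_of_disjoint hdisj]
  rw [this, Finset.card_powersetCard, Finset.card_compl, Fintype.card_fin]

section Trace
variable {n : ℕ} (ψ : (Fin n → Fin 2) → ℂ) (S K : Finset (Fin n))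

/-- extend an assignment on S by one on K \ S to get one on K -/
def extAsn (a : {x // x ∈ S} → Fin 2) (d : {x // x ∈ K \ S} → Fin 2) :
    {x // x ∈ K} → Fin 2 :=
  fun x => if h : x.1 ∈ S then a ⟨x.1, h⟩ else d ⟨x.1, Finset.mem_sdiff.mpr ⟨x.2, h⟩⟩

def splitEquiv (hSK : S ⊆ K) : (({x // x ∈ K \ S} → Fin 2) × ({x // x ∈ Kᶜ} → Fin 2)) ≃
    ({x // x ∈ Sᶜ} → Fin 2) where
  toFun p := fun x =>
    if h : x.1 ∈ K then p.1 ⟨x.1, Finset.mem_sdiff.mpr ⟨h, Finset.mem_compl.mp x.2⟩⟩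
    else p.2 ⟨x.1, Finset.mem_compl.mpr h⟩
  invFun c :=
    (fun x => c ⟨x.1, Finset.mem_compl.mpr (Finset.mem_sdiff.mp x.2).2⟩,
     fun x => c ⟨x.1, Finset.mem_compl.mpr (fun hS => Finset.mem_compl.mp x.2 (hSK hS))⟩)
  left_inv p := by
    obtain ⟨d, e⟩ := p
    refine Prod.ext (funext fun x => ?_) (funext fun x => ?_)
    · have hx := Finset.mem_sdiff.mp x.2
      simp only [dif_pos hx.1]
    · simp only [dif_neg (Finset.mem_compl.mp x.2)]
  right_inv c := by
    funext x
    dsimp only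
    split <;> rfl

lemma glue_split (hSK : S ⊆ K) (a : {x // x ∈ S} → Fin 2) (d : {x // x ∈ K \ S} → Fin 2)
    (e : {x // x ∈ Kᶜ} → Fin 2) :
    glue S a (splitEquiv S K hSK (d, e)) = glue K (extAsn S K a d) e := by
  funext i
  by_cases hiS : i ∈ S
  · have hiK : i ∈ K := hSK hiS
    simp [glue, splitEquiv, extAsn, hiS, hiK]
  · by_cases hiK : i ∈ K
    · simp [glue, splitEquiv, extAsn, hiS, hiK]
    · simp [glue, splitEquiv, extAsn, hiS, hiK]

lemma extAsn_inj (hSK : S ⊆ K) (a b : {x // x ∈ S} → Fin 2) (d : {x // x ∈ K \ S} → Fin 2) :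
    extAsn S K a d = extAsn S K b d ↔ a = b := by
  constructor
  · intro hab
    funext x
    have := congrFun hab ⟨x.1, hSK x.2⟩
    simpa [extAsn, x.2] using this
  · rintro rfl; rfl

lemma trace_down (hSK : S ⊆ K) (hK : IsMaxMixed ψ K) : IsMaxMixed ψ S := by
  have hcard : S.card ≤ K.card := Finset.card_le_card hSK
  unfold IsMaxMixed at *
  ext a b
  rw [reduced]
  simp only [Matrix.of_apply]
  rw [← Equiv.sum_comp (splitEquiv S K hSK)]
  rw [Fintype.sum_prod_type]
  have key : ∀ (d : {x // x ∈ K \ S} → Fin 2),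
      (∑ e : {x // x ∈ Kᶜ} → Fin 2,
        ψ (glue S a (splitEquiv S K hSK (d, e))) *
          star (ψ (glue S b (splitEquiv S K hSK (d, e)))))
      = ((2 : ℂ) ^ K.card)⁻¹ * (if a = b then 1 else 0) := by
    intro d
    have : (∑ e : {x // x ∈ Kᶜ} → Fin 2,
        ψ (glue S a (splitEquiv S K hSK (d, e))) *
          star (ψ (glue S b (splitEquiv S K hSK (d, e)))))
        = reduced ψ K (extAsn S K a d) (extAsn S K b d) := by
      rw [reduced]
      simp only [Matrix.of_apply]
      congr 1
      funext e
      rw [glue_split S K hSK, glue_split S K hSK]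
    rw [this, hK]
    simp only [Matrix.smul_apply, Matrix.one_apply, smul_eq_mul]
    simp only [extAsn_inj S K hSK]
  simp only [key]
  rw [Finset.sum_const, Finset.card_univ]
  have hcardfn : Fintype.card ({x // x ∈ K \ S} → Fin 2) = 2 ^ (K.card - S.card) := by
    rw [Fintype.card_fun, Fintype.card_fin, Fintype.card_coe, Finset.card_sdiff_of_subset hSK]
  rw [hcardfn]
  simp only [Matrix.smul_apply, Matrix.one_apply, smul_eq_mul]
  rw [nsmul_eq_mul]
  push_cast
  rw [show K.card = (K.card - S.card) + S.card by omega, pow_add]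
  have h2 : (2 : ℂ) ^ (K.card - S.card) ≠ 0 := pow_ne_zero _ two_ne_zero
  field_simp
  rw [Nat.add_sub_cancel]

end Trace

/-- If an `n`-qubit pure state has more than `C(n,k) - C(n-s,k-s)` maximally
mixed `k`-party reductions (`s < k ≤ ⌊n/2⌋`), then it is `s`-uniform: every
reduction on at most `s` parties is maximally mixed. -/
theorem stmt16 (n k s : ℕ) (hs : s < k) (hk : k ≤ n / 2)
    (ψ : (Fin n → Fin 2) → ℂ)
    (hψ : ∑ c : Fin n → Fin 2, ‖ψ c‖ ^ 2 = 1)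
    (h : n.choose k - (n - s).choose (k - s) <
      Nat.card {K : Finset (Fin n) // K.card = k ∧ IsMaxMixed ψ K}) :
    ∀ S : Finset (Fin n), S.card ≤ s → IsMaxMixed ψ S := by
  classical
  intro S hScard
  have hkn : k ≤ n := le_trans hk (Nat.div_le_self n 2)
  set F := Finset.univ.filter (fun K : Finset (Fin n) => K.card = k ∧ IsMaxMixed ψ K) with hF
  have hNat : Nat.card {K : Finset (Fin n) // K.card = k ∧ IsMaxMixed ψ K} = F.card := by
    rw [Nat.card_eq_fintype_card, Fintype.card_subtype]
  rw [hNat] at h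
  have hexists : ∃ K ∈ F, S ⊆ K := by
    by_contra hcon
    push_neg at hcon
    have hsub : F ⊆ (Finset.univ.powersetCard k) \
        ((Finset.univ.powersetCard k).filter (fun K => S ⊆ K)) := by
      intro K hKF
      have hK := Finset.mem_filter.mp hKF
      simp only [Finset.mem_sdiff, Finset.mem_filter, Finset.mem_powersetCard]
      exact ⟨⟨Finset.subset_univ _, hK.2.1⟩,
        fun hm => hcon K hKF hm.2⟩
    have hF2 : F.card ≤ n.choose k - (n - S.card).choose (k - S.card) := by
      calc F.card ≤ _ := Finset.card_le_card hsub
        _ = ((Finset.univ : Finset (Fin n)).powersetCard k).card -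
            (((Finset.univ : Finset (Fin n)).powersetCard k).filter (fun K => S ⊆ K)).card :=
          Finset.card_sdiff_of_subset (Finset.filter_subset _ _)
        _ = n.choose k - (n - S.card).choose (k - S.card) := by
          rw [Finset.card_powersetCard, Finset.card_univ, Fintype.card_fin,
            card_supersets n S k (le_trans hScard (le_of_lt hs))]
    have hmono : (n - s).choose (k - s) ≤ (n - S.card).choose (k - S.card) :=
      choose_anti n k hkn s (le_of_lt hs) S.card hScard
    omega
  obtain ⟨K, hKF, hSK⟩ := hexists
  have hK := (Finset.mem_filter.mp hKF).2
  exact trace_down ψ S K hSK hK.2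
end
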